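/- Let K be a field of characteristic ≠ 2, and let A, a, b ∈ K. Suppose x, y ∈ K satisfy y² = x⁴ − 6a·x² − 8b·x − 4A − 3a². Define u = (x² + y − a)/2 and v = (x³ + xy − 3ax − 2b)/2. Then v² = u³ + Au + B, where B = b² − a³ − A·a. -/

import Mathlib

/-- The map `(x,y) ↦ ((x² + y − a)/2, (x³ + xy − 3ax − 2b)/2)` sends affine points of the
quartic `y² = x⁴ − 6ax² − 8bx − 4A − 3a²` to the elliptic curve `v² = u³ + Au + B` with
`B = b² − a³ − Aa`. -/
theorem quartic_to_elliptic {K : Type*} [Field K] (hchar : (2 : K) ≠ 0)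
    (A a b x y : K)
    (hxy : y ^ 2 = x ^ 4 - 6 * a * x ^ 2 - 8 * b * x - 4 * A - 3 * a ^ 2)
    (u v : K) (hu : u = (x ^ 2 + y - a) / 2) (hv : v = (x ^ 3 + x * y - 3 * a * x - 2 * b) / 2) :
    v ^ 2 = u ^ 3 + A * u + (b ^ 2 - a ^ 3 - A * a) := by
  subst hu hv
  have h8 : (8:K) ≠ 0 := by
    have := mul_ne_zero hchar (mul_ne_zero hchar hchar)
    norm_num at this ⊢; exact this
  field_simp
  linear_combination (3 * a - x ^ 2 - y) * hxy
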